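/- Let q ∈ (1,2] with Hölder conjugate p, d ≥ 2, n ≥ 3, l ∈ {2,…,d}, k ∈ {3,…,n}. Define rows A_1 = −2^(−1/p) e_1 + 2^(−1/p) e_l, A_k = e_1, and A_i = 2^(−1/p) e_1 + 2^(−1/p) e_l for all other i. Then max over x ∈ B_q^d of min over i ∈ [n] of A_i·x equals 1 / (1 + (2^(1−1/q) + 1)^q)^(1/q), attained at x = (e_1 + (2^(1−1/q)+1) e_l) / (1 + (2^(1−1/q)+1)^q)^(1/q). -/

import Mathlib

lemma sum_two_of {d : ℕ} (j0 j1 : Fin d) (h : j0 ≠ j1) (f : Fin d → ℝ)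
    (hf : ∀ j, j ≠ j0 → j ≠ j1 → f j = 0) :
    ∑ j, f j = f j0 + f j1 := by
  rw [← Finset.sum_pair h]
  refine (Finset.sum_subset (Finset.subset_univ _) ?_).symm
  intro x _ hx
  simp only [Finset.mem_insert, Finset.mem_singleton, not_or] at hx
  exact hf x hx.1 hx.2

lemma two_le_sum {d : ℕ} (j0 j1 : Fin d) (h : j0 ≠ j1) (f : Fin d → ℝ)
    (hf : ∀ j, 0 ≤ f j) : f j0 + f j1 ≤ ∑ j, f j := by
  rw [← Finset.sum_pair h]
  exact Finset.sum_le_sum_of_subset_of_nonneg (Finset.subset_univ _) (fun j _ _ => hf j)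

theorem stmt_12 (d n : ℕ) (hd : 2 ≤ d) (hn : 3 ≤ n)
    (p q : ℝ) (hq1 : 1 < q) (hq2 : q ≤ 2) (hpq : 1 / p + 1 / q = 1)
    (l : Fin d) (hl : l ≠ ⟨0, by omega⟩)
    (k : Fin n) (hk0 : k ≠ ⟨0, by omega⟩) (hk1 : k ≠ ⟨1, by omega⟩)
    (A : Fin n → Fin d → ℝ)
    (hA0 : A ⟨0, by omega⟩ = fun j => if j = ⟨0, by omega⟩ then -((2:ℝ) ^ (-(1 / p)))
                          else if j = l then (2:ℝ) ^ (-(1 / p)) else 0)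
    (hAk : A k = fun j => if j = ⟨0, by omega⟩ then 1 else 0)
    (hAi : ∀ i : Fin n, i ≠ ⟨0, by omega⟩ → i ≠ k →
      A i = fun j => if j = ⟨0, by omega⟩ ∨ j = l then (2:ℝ) ^ (-(1 / p)) else 0)
    (σ : ℝ) (hσ : σ = 1 / (1 + ((2:ℝ) ^ (1 - 1 / q) + 1) ^ q) ^ (1 / q))
    (xbar : Fin d → ℝ)
    (hxbar : xbar = fun j => if j = ⟨0, by omega⟩ then σ
                             else if j = l then ((2:ℝ) ^ (1 - 1 / q) + 1) * σ else 0) :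
    (∑ j, |xbar j| ^ q) ≤ 1 ∧
    (∀ i, σ ≤ ∑ j, A i j * xbar j) ∧
    (∀ x : Fin d → ℝ, (∑ j, |x j| ^ q) ≤ 1 → ∃ i, (∑ j, A i j * x j) ≤ σ) := by
  set z0 : Fin d := ⟨0, by omega⟩ with hz0
  set a : ℝ := (2:ℝ) ^ (-(1 / p)) with ha
  set b : ℝ := (2:ℝ) ^ (1 - 1 / q) with hb
  have hq0 : (0:ℝ) < q := by linarith
  have hp' : 1 / p = 1 - 1 / q := by linarith
  have hb0 : 0 < b := Real.rpow_pos_of_pos (by norm_num) _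
  have hab : a * b = 1 := by
    rw [ha, hb, hp', ← Real.rpow_add (by norm_num)]
    simp
  have ha0 : 0 < a := Real.rpow_pos_of_pos (by norm_num) _
  set c : ℝ := b + 1 with hc
  have hc0 : (0:ℝ) < c := by linarith
  set T : ℝ := 1 + c ^ q with hT
  have hcq0 : (0:ℝ) < c ^ q := Real.rpow_pos_of_pos hc0 _
  have hT0 : (0:ℝ) < T := by positivity
  have hσ0 : 0 < σ := by
    rw [hσ]
    positivity
  have hσq : σ ^ q = 1 / T := by
    rw [hσ, one_div, Real.inv_rpow (by positivity), ← Real.rpow_mul hT0.le,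
      one_div, inv_mul_cancel₀ hq0.ne', Real.rpow_one, one_div]
  have hlz : l ≠ z0 := hl
  -- part 1
  have part1 : (∑ j, |xbar j| ^ q) = 1 := by
    rw [sum_two_of z0 l hlz.symm _ (fun j hj0 hjl => by
      rw [hxbar]; simp only [if_neg hj0, if_neg hjl]
      rw [abs_zero, Real.zero_rpow (by positivity)])]
    rw [hxbar]
    simp only [eq_self_iff_true, if_true, if_neg hlz, if_neg (Ne.symm hlz)]
    rw [abs_of_pos hσ0, abs_of_pos (by positivity : (0:ℝ) < c * σ),
      Real.mul_rpow hc0.le hσ0.le, hσq]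
    field_simp
    exact hT.symm
  refine ⟨le_of_eq part1, ?_, ?_⟩
  · -- part 2
    intro i
    by_cases hi0 : i = (⟨0, by omega⟩ : Fin n)
    · subst hi0
      rw [hA0, sum_two_of z0 l hlz.symm _ (fun j hj0 hjl => by
        simp only [if_neg hj0, if_neg hjl, zero_mul])]
      simp only [eq_self_iff_true, if_true, if_neg hlz, if_neg (Ne.symm hlz)]
      rw [hxbar]
      simp only [eq_self_iff_true, if_true, if_neg hlz, if_neg (Ne.symm hlz)]
      have key : a * (c * σ) = a * b * σ + a * σ := by rw [hc]; ring
      rw [hab, one_mul] at key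
      linarith
    · by_cases hik : i = k
      · subst hik
        rw [hAk, sum_two_of z0 l hlz.symm _ (fun j hj0 hjl => by
          simp only [if_neg hj0, zero_mul])]
        simp only [eq_self_iff_true, if_true, if_neg hlz, if_neg (Ne.symm hlz)]
        rw [hxbar]
        simp only [eq_self_iff_true, if_true, if_neg hlz, if_neg (Ne.symm hlz)]
        linarith
      · rw [hAi i hi0 hik, sum_two_of z0 l hlz.symm _ (fun j hj0 hjl => by
          simp only [if_neg (by tauto : ¬(j = z0 ∨ j = l)), zero_mul])]
        simp only [eq_self_iff_true, true_or, or_true, if_true]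
        rw [hxbar]
        simp only [eq_self_iff_true, if_true, if_neg hlz, if_neg (Ne.symm hlz)]
        have key : a * (c * σ) = a * b * σ + a * σ := by rw [hc]; ring
        rw [hab, one_mul] at key
        nlinarith [mul_pos ha0 hσ0]
  · -- part 3
    intro x hx
    by_cases h1 : x z0 ≤ σ
    · refine ⟨k, ?_⟩
      rw [hAk, sum_two_of z0 l hlz.symm _ (fun j hj0 hjl => by
        simp only [if_neg hj0, zero_mul])]
      simp only [eq_self_iff_true, if_true, if_neg hlz, if_neg (Ne.symm hlz)]
      linarith
    · push_neg at h1
      by_cases h2 : -a * x z0 + a * x l ≤ σ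
      · refine ⟨⟨0, by omega⟩, ?_⟩
        rw [hA0, sum_two_of z0 l hlz.symm _ (fun j hj0 hjl => by
          simp only [if_neg hj0, if_neg hjl, zero_mul])]
        simp only [eq_self_iff_true, if_true, if_neg hlz, if_neg (Ne.symm hlz)]
        linarith
      · exfalso
        push_neg at h2
        -- x l > x z0 + σ/a > σ + σ*b = c*σ  (since 1/a = b)
        have hxl : c * σ < x l := by
          have h3 : σ * b < a * x l * b - a * x z0 * b := by nlinarith
          rw [mul_comm a (x l), mul_assoc, mul_comm a (x z0), mul_assoc, hab] at h3
          nlinarith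
        have hlow : |x z0| ^ q + |x l| ^ q ≤ ∑ j, |x j| ^ q :=
          two_le_sum z0 l hlz.symm (fun j => |x j| ^ q) (fun j => by positivity)
        have e1 : σ ^ q < |x z0| ^ q := by
          rw [abs_of_pos (lt_trans hσ0 h1)]
          exact Real.rpow_lt_rpow hσ0.le h1 hq0
        have e2 : (c * σ) ^ q < |x l| ^ q := by
          rw [abs_of_pos (lt_trans (by positivity) hxl)]
          exact Real.rpow_lt_rpow (by positivity) hxl hq0
        rw [Real.mul_rpow hc0.le hσ0.le, hσq] at e2
        rw [hσq] at e1
        have : (1:ℝ) < |x z0| ^ q + |x l| ^ q := by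
          have : 1 / T + c ^ q * (1 / T) = 1 := by field_simp; exact hT.symm
          linarith
        linarith
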